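/- The 4×4 Hermitian matrix B^{π/4} := (1/4)·[[4, 0, 1−i, 2−2i],[0, 0, 0, −1+i],[1+i, 0, 0, 0],[2+2i, −1−i, 0, 4]] is not positive semidefinite: there exists a vector v ∈ ℂ⁴ with v†·B^{π/4}·v < 0. Hence the reduced dynamics induced by applying √CPHASE to the entangled state Ψ(π/4) is not completely positive. -/

import Mathlib

open Matrix Complex
open scoped ComplexOrder

/-- The dynamical (Choi) matrix B^{π/4} of the reduced dynamics obtained by applying
√CPHASE to the entangled state Ψ(π/4). -/
noncomputable def Bpi4 : Matrix (Fin 4) (Fin 4) ℂ :=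
  (1 / 4 : ℂ) •
    !![4, 0, 1 - I, 2 - 2 * I;
       0, 0, 0, -1 + I;
       1 + I, 0, 0, 0;
       2 + 2 * I, -1 - I, 0, 4]

lemma Bpi4_witness :
    (star (![1, 0, -4, 0] : Fin 4 → ℂ) ⬝ᵥ Bpi4 *ᵥ ![1, 0, -4, 0]).re < 0 := by
  have : star (![1, 0, -4, 0] : Fin 4 → ℂ) ⬝ᵥ Bpi4 *ᵥ ![1, 0, -4, 0] = -1 := by
    simp [Bpi4, Matrix.mulVec, dotProduct, Fin.sum_univ_four, Matrix.smul_apply, Pi.star_apply, Matrix.vecHead, Matrix.vecTail]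
    norm_num [Complex.ext_iff]
  rw [this]
  norm_num

/-- B^{π/4} is not positive semidefinite: there is a vector v with v†·B^{π/4}·v < 0.
Hence the reduced dynamics induced by √CPHASE on Ψ(π/4) is not completely positive. -/
theorem Bpi4_not_posSemidef :
    (∃ v : Fin 4 → ℂ, (star v ⬝ᵥ Bpi4 *ᵥ v).re < 0) ∧ ¬ Bpi4.PosSemidef := by
  refine ⟨⟨![1, 0, -4, 0], Bpi4_witness⟩, fun h => ?_⟩
  have h2 := h.dotProduct_mulVec_nonneg ![1, 0, -4, 0]
  have := (Complex.le_def.mp h2).1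
  simp only [Complex.zero_re] at this
  linarith [Bpi4_witness]
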